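/- (Minimum Free Estimate) Let (f_ℓ)_{ℓ=1}^p ⊂ D_wh have pairwise disjoint supports and (x_k)_{k=1}^d be a block sequence in X_wh with ‖x_k‖ ≤ C, such that for all ℓ and k, min supp f_ℓ ∉ ran x_k. Then for every (λ_ℓ)_{ℓ=1}^p in the unit ball of ℓ_2 and all scalars (b_k)_{k=1}^d: ∑_{ℓ=1}^p λ_ℓ f_ℓ(∑_{k=1}^d b_k x_k) ≤ 4C (∑_{k=1}^d b_k^2)^{1/2}. -/

import Mathlib

/-- The first Schreier family: finite sets `F` with `|F| ≤ min F`. -/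
def SchreierOne : Set (Finset ℕ) := {F | ∀ k ∈ F, F.card ≤ k}

/-- The minimum of a finite set of naturals (0 for the empty set). -/
noncomputable def finMin (F : Finset ℕ) : ℕ := sInf {k | k ∈ F}

/-- The convolution `P[Q]` of two families of finite subsets of ℕ:
unions of successive members of `Q` whose minima form a set in `P`. -/
def conv (P Q : Set (Finset ℕ)) : Set (Finset ℕ) :=
  {U | ∃ (d : ℕ) (F : Fin d → Finset ℕ),
    (∀ i, F i ∈ Q) ∧ (∀ i, (F i).Nonempty) ∧
    (∀ i j : Fin d, i < j → ∀ a ∈ F i, ∀ b ∈ F j, a < b) ∧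
    (Finset.univ.image fun i => finMin (F i)) ∈ P ∧
    U = Finset.univ.biUnion F}

/-- The modified convolution `P[Q]_M`: unions of pairwise disjoint members of `Q`
whose minima form a set in `P`. -/
def mconv (P Q : Set (Finset ℕ)) : Set (Finset ℕ) :=
  {U | ∃ (d : ℕ) (F : Fin d → Finset ℕ),
    (∀ i, F i ∈ Q) ∧ (∀ i, (F i).Nonempty) ∧
    (∀ i j : Fin d, i ≠ j → Disjoint (F i) (F j)) ∧
    (Finset.univ.image fun i => finMin (F i)) ∈ P ∧
    U = Finset.univ.biUnion F}

/-- The Schreier families `S_n` (indexed so that `Schreier 1 = S_1`,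
`Schreier (n+1) = S_1[S_n]`). -/
def Schreier : ℕ → Set (Finset ℕ)
  | 0 => {F | F.card ≤ 1}
  | 1 => SchreierOne
  | (n+2) => conv SchreierOne (Schreier (n+1))

/-- The modified Schreier families `S^M_n`. -/
def SchreierM : ℕ → Set (Finset ℕ)
  | 0 => {F | F.card ≤ 1}
  | 1 => SchreierOne
  | (n+2) => mconv SchreierOne (SchreierM (n+1))

/-- The sequence `m_j`: `m_0 = m_1 = 2`, `m_{j+1} = m_j^3`. -/
def mseq : ℕ → ℕ
  | 0 => 2
  | 1 => 2
  | (j+2) => (mseq (j+1)) ^ 3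

/-- `ℓ_j = 3 log_2 m_j + 1`. -/
def lseq (j : ℕ) : ℕ := 3 * Nat.log 2 (mseq j) + 1

/-- The sequence `n_j`: `n_0 = 1` and `n_{j+1} > ℓ_{j+1}(n_j + 1)`. -/
def nseq : ℕ → ℕ
  | 0 => 1
  | (j+1) => lseq (j+1) * (nseq j + 1) + 1

/-- The minimum of the support of an element of `c_00` (0 if empty). -/
noncomputable def minsupp (f : ℕ →₀ ℝ) : ℕ := sInf {k | f k ≠ 0}

/-- The maximum of the support of an element of `c_00` (0 if empty). -/
noncomputable def maxsupp (f : ℕ →₀ ℝ) : ℕ := sSup {k | f k ≠ 0}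

/-- Membership in the set `Σ` of candidate special sequences: a nonempty finite list of
pairs `(E_i, j_i)` with the `E_i` pairwise disjoint nonempty finite sets, the `j_i`
strictly increasing, `j_1 ∈ N_1` and `j_i ∈ N_2` for `i > 1`. -/
def InSigma (N1 N2 : Set ℕ) (l : List (Finset ℕ × ℕ)) : Prop :=
  l ≠ [] ∧
  l.Pairwise (fun a b => Disjoint a.1 b.1) ∧
  l.Chain' (fun a b => a.2 < b.2) ∧
  (∀ a ∈ l.head?, a.2 ∈ N1) ∧
  (∀ a ∈ l.tail, a.2 ∈ N2) ∧
  (∀ a ∈ l, a.1.Nonempty)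

/-- `l` is a `σ`-special sequence: it lies in `Σ` and `σ` of each proper initial
segment gives the next index. -/
def IsSpecial (N1 N2 : Set ℕ) (σ : List (Finset ℕ × ℕ) → ℕ)
    (l : List (Finset ℕ × ℕ)) : Prop :=
  InSigma N1 N2 l ∧
  ∀ (i : ℕ) (h : i + 1 < l.length), σ (l.take (i + 1)) = (l.get ⟨i + 1, h⟩).2

/-- `σ` is an admissible coding: it maps `Σ` into `N_2`, is injective on `Σ`, its values
dominate the indices appearing in the sequence, and it satisfies the growth condition
`m_{2σ(s⌢(E,j))} > m_{2σ(s)}·(max E_last)^2`. -/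
def GoodCoding (N1 N2 : Set ℕ) (σ : List (Finset ℕ × ℕ) → ℕ) : Prop :=
  (∀ l, InSigma N1 N2 l → σ l ∈ N2) ∧
  (∀ l l', InSigma N1 N2 l → InSigma N1 N2 l' → σ l = σ l' → l = l') ∧
  (∀ l, InSigma N1 N2 l → ∀ a ∈ l, a.2 < σ l) ∧
  (∀ (l : List (Finset ℕ × ℕ)) (a : Finset ℕ × ℕ) (h : l ≠ []),
      InSigma N1 N2 l → InSigma N1 N2 (l ++ [a]) →
      mseq (2 * σ l) * (sSup {k | k ∈ (l.getLast h).1}) ^ 2 < mseq (2 * σ (l ++ [a])))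

/-- The norming set `D_wh` of the space `X_wh`, together with weights: the minimal set of
finitely supported functionals containing `±e_k^*` and closed under the modified
`ℓ_2-(1/m_{2j}, S_{n_{2j}})` operations (even case) and under the `ℓ_2` operations on
`S_{n_{2j+1}}` `σ`-special sequences of functionals (odd case). -/
inductive DW (N1 N2 : Set ℕ) (σ : List (Finset ℕ × ℕ) → ℕ) : (ℕ →₀ ℝ) → ℕ → Prop where
  | pos (k : ℕ) : DW N1 N2 σ (Finsupp.single k 1) 0
  | neg (k : ℕ) : DW N1 N2 σ (Finsupp.single k (-1)) 0
  | even (j p : ℕ) (f : Fin p → ℕ →₀ ℝ) (w : Fin p → ℕ) (lam : Fin p → ℝ)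
      (hmem : ∀ i, DW N1 N2 σ (f i) (w i))
      (hdisj : ∀ i i', i ≠ i' → Disjoint (f i).support (f i').support)
      (hallow : (Finset.univ.image fun i => minsupp (f i)) ∈ SchreierM (nseq (2 * j)))
      (hlam : (∑ i, (lam i) ^ 2) ≤ 1) :
      DW N1 N2 σ (((mseq (2 * j) : ℕ) : ℝ)⁻¹ • ∑ i, lam i • f i) (mseq (2 * j))
  | odd (j p : ℕ) (f : Fin p → ℕ →₀ ℝ) (E : Fin p → Finset ℕ) (js : Fin p → ℕ)
      (lam : Fin p → ℝ)
      (hmem : ∀ i, DW N1 N2 σ (f i) (mseq (2 * js i)))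
      (hsupp : ∀ i, (f i).support ⊆ E i)
      (hspec : IsSpecial N1 N2 σ (List.ofFn fun i => (E i, js i)))
      (hallow : (Finset.univ.image fun i => finMin (E i)) ∈ SchreierM (nseq (2 * j + 1)))
      (hbig : ∀ i, 2 * j + 2 < 2 * js i)
      (hlam : (∑ i, (lam i) ^ 2) ≤ 1) :
      DW N1 N2 σ (((mseq (2 * j + 1) : ℕ) : ℝ)⁻¹ • ∑ i, lam i • f i) (mseq (2 * j + 1))

/-- Membership in the norming set `D_wh` (forgetting the weight). -/
def DWh (N1 N2 : Set ℕ) (σ : List (Finset ℕ × ℕ) → ℕ) (f : ℕ →₀ ℝ) : Prop :=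
  ∃ w, DW N1 N2 σ f w

/-- The action of a finitely supported functional on an element of `c_00`. -/
def dotp (f x : ℕ →₀ ℝ) : ℝ := f.sum fun k v => v * x k

/-- The norm of `X_wh` on `c_00`: `‖x‖ = sup {f(x) : f ∈ D_wh}`. -/
noncomputable def wnorm (N1 N2 : Set ℕ) (σ : List (Finset ℕ × ℕ) → ℕ)
    (x : ℕ →₀ ℝ) : ℝ :=
  sSup {r | ∃ f, DWh N1 N2 σ f ∧ r = dotp f x}

lemma two_le_mseq : ∀ j, 2 ≤ mseq j := by
  intro j
  induction j using Nat.twoStepInduction with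
  | zero => norm_num [mseq]
  | one => norm_num [mseq]
  | more n ih ih1 =>
    have h3 : mseq (n+2) = (mseq (n+1))^3 := rfl
    calc 2 ≤ mseq (n+1) := ih1
      _ ≤ (mseq (n+1))^3 := Nat.le_self_pow (by norm_num) _
      _ = mseq (n+2) := h3.symm

lemma finMin_mem {F : Finset ℕ} (h : F.Nonempty) : finMin F ∈ F := by
  have : {k | k ∈ F}.Nonempty := ⟨h.choose, h.choose_spec⟩
  exact Nat.sInf_mem this

lemma finMin_le {F : Finset ℕ} {n : ℕ} (h : n ∈ F) : finMin F ≤ n := Nat.sInf_le h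

lemma schreierOne_dominate (F G : Finset ℕ) (φ : ℕ → ℕ) (hF : F ∈ SchreierOne)
    (hinj : Set.InjOn φ ↑G) (hmem : ∀ v ∈ G, φ v ∈ F) (hle : ∀ v ∈ G, φ v ≤ v) :
    G ∈ SchreierOne := by
  intro v hv
  calc G.card ≤ F.card := Finset.card_le_card_of_injOn φ hmem hinj
    _ ≤ φ v := hF _ (hmem v hv)
    _ ≤ v := hle v hv

theorem schreierM_dominate : ∀ (n : ℕ) (F G : Finset ℕ) (φ : ℕ → ℕ),
    F ∈ SchreierM n → Set.InjOn φ ↑G → (∀ v ∈ G, φ v ∈ F) → (∀ v ∈ G, φ v ≤ v) →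
    G ∈ SchreierM n := by
  intro n
  induction n using Nat.twoStepInduction with
  | zero =>
    intro F G φ hF hinj hmem hle
    show G.card ≤ 1
    exact le_trans (Finset.card_le_card_of_injOn φ hmem hinj) hF
  | one =>
    intro F G φ hF hinj hmem hle
    exact schreierOne_dominate F G φ hF hinj hmem hle
  | more n ih ih1 =>
    intro F G φ hF hinj hmem hle
    obtain ⟨d, Fi, hQ, hne, hdis, hmin, hU⟩ := hF
    classical
    set Gi : Fin d → Finset ℕ := fun i => G.filter (fun v => φ v ∈ Fi i) with hGi
    set J : Finset (Fin d) := Finset.univ.filter (fun i => (Gi i).Nonempty) with hJ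
    set e := J.orderIsoOfFin rfl with he
    -- uniqueness of the part a value's min belongs to
    have hGisubG : ∀ i, Gi i ⊆ G := fun i => Finset.filter_subset _ _
    have hGidis : ∀ i j : Fin d, i ≠ j → Disjoint (Gi i) (Gi j) := by
      intro i j hij
      rw [Finset.disjoint_left]
      intro v hvi hvj
      have h1 : φ v ∈ Fi i := (Finset.mem_filter.mp hvi).2
      have h2 : φ v ∈ Fi j := (Finset.mem_filter.mp hvj).2
      exact (Finset.disjoint_left.mp (hdis i j hij)) h1 h2
    refine ⟨J.card, fun t => Gi (e t), ?_, ?_, ?_, ?_, ?_⟩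
    · intro t
      refine ih1 (Fi (e t)) (Gi (e t)) φ (hQ _) (hinj.mono ?_) ?_ ?_
      · exact_mod_cast hGisubG (e t)
      · intro v hv; exact (Finset.mem_filter.mp hv).2
      · intro v hv; exact hle v (hGisubG _ hv)
    · intro t
      exact (Finset.mem_filter.mp (e t).2).2
    · intro t t' htt'
      apply hGidis
      intro hcontra
      exact htt' (e.injective (Subtype.coe_injective hcontra))
    · -- minima in SchreierOne
      set ψ : ℕ → ℕ := fun v =>
        if h : ∃ i, i ∈ J ∧ finMin (Gi i) = v then finMin (Fi h.choose) else 0 with hψ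
      have key : ∀ v, (h : ∃ i, i ∈ J ∧ finMin (Gi i) = v) →
          (h.choose ∈ J ∧ finMin (Gi h.choose) = v) := fun v h => h.choose_spec
      have huniq : ∀ i i', i ∈ J → i' ∈ J → finMin (Gi i) = finMin (Gi i') → i = i' := by
        intro i i' hi hi' hfm
        by_contra hne'
        have hnei : (Gi i).Nonempty := (Finset.mem_filter.mp hi).2
        have hnei' : (Gi i').Nonempty := (Finset.mem_filter.mp hi').2
        have h1 : finMin (Gi i) ∈ Gi i := finMin_mem hnei
        have h2 : finMin (Gi i) ∈ Gi i' := hfm ▸ finMin_mem hnei'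
        exact (Finset.disjoint_left.mp (hGidis i i' hne')) h1 h2
      apply schreierOne_dominate (Finset.univ.image fun i => finMin (Fi i)) _ ψ hmin
      · -- InjOn
        intro v hv v' hv' hψeq
        simp only [Finset.coe_image, Set.mem_image] at hv hv'
        obtain ⟨t, _, rfl⟩ := hv
        obtain ⟨t', _, rfl⟩ := hv'
        have h : ∃ i, i ∈ J ∧ finMin (Gi i) = finMin (Gi (e t)) := ⟨e t, (e t).2, rfl⟩
        have h' : ∃ i, i ∈ J ∧ finMin (Gi i) = finMin (Gi (e t')) := ⟨e t', (e t').2, rfl⟩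
        have hc := key _ h
        have hc' := key _ h'
        rw [hψ] at hψeq
        simp only [dif_pos h, dif_pos h'] at hψeq
        -- h.choose = h'.choose since Fi disjoint nonempty
        have hchoose_eq : h.choose = h'.choose := by
          by_contra hne'
          have n1 : (Fi h.choose).Nonempty := hne _
          have m1 : finMin (Fi h.choose) ∈ Fi h.choose := finMin_mem n1
          have m2 : finMin (Fi h.choose) ∈ Fi h'.choose := hψeq ▸ finMin_mem (hne h'.choose)
          exact (Finset.disjoint_left.mp (hdis _ _ hne')) m1 m2
        rw [← hc.2, ← hc'.2, hchoose_eq]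
      · intro v hv
        simp only [Finset.mem_image] at hv ⊢
        obtain ⟨t, _, rfl⟩ := hv
        have h : ∃ i, i ∈ J ∧ finMin (Gi i) = finMin (Gi (e t)) := ⟨e t, (e t).2, rfl⟩
        rw [hψ]; simp only [dif_pos h]
        exact ⟨h.choose, Finset.mem_univ _, rfl⟩
      · intro v hv
        simp only [Finset.mem_image] at hv
        obtain ⟨t, _, rfl⟩ := hv
        have h : ∃ i, i ∈ J ∧ finMin (Gi i) = finMin (Gi (e t)) := ⟨e t, (e t).2, rfl⟩
        rw [hψ]; simp only [dif_pos h]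
        have hc := key _ h
        have hnei : (Gi h.choose).Nonempty := (Finset.mem_filter.mp hc.1).2
        have hm : finMin (Gi h.choose) ∈ Gi h.choose := finMin_mem hnei
        have hφ : φ (finMin (Gi h.choose)) ∈ Fi h.choose := (Finset.mem_filter.mp hm).2
        calc finMin (Fi h.choose) ≤ φ (finMin (Gi h.choose)) := finMin_le hφ
          _ ≤ finMin (Gi h.choose) := hle _ (hGisubG _ hm)
          _ = finMin (Gi (e t)) := hc.2
    · -- union
      ext v
      simp only [Finset.mem_biUnion, Finset.mem_univ, true_and]
      constructor
      · intro hv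
        have : φ v ∈ Finset.univ.biUnion Fi := hU ▸ hmem v hv
        simp only [Finset.mem_biUnion, Finset.mem_univ, true_and] at this
        obtain ⟨i, hi⟩ := this
        have hvGi : v ∈ Gi i := Finset.mem_filter.mpr ⟨hv, hi⟩
        have hiJ : i ∈ J := Finset.mem_filter.mpr ⟨Finset.mem_univ _, ⟨v, hvGi⟩⟩
        obtain ⟨t, ht⟩ := e.surjective ⟨i, hiJ⟩
        exact ⟨t, by rw [ht]; exact hvGi⟩
      · rintro ⟨t, ht⟩
        exact hGisubG _ ht


section AUX2

lemma minsupp_mem {f : ℕ →₀ ℝ} (h : f ≠ 0) : minsupp f ∈ f.support := by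
  have hne : {k | f k ≠ 0}.Nonempty := by
    obtain ⟨a, ha⟩ := Finsupp.support_nonempty_iff.mpr h
    exact ⟨a, Finsupp.mem_support_iff.mp ha⟩
  exact Finsupp.mem_support_iff.mpr (Nat.sInf_mem hne)

lemma minsupp_le {f : ℕ →₀ ℝ} {n : ℕ} (h : f n ≠ 0) : minsupp f ≤ n := Nat.sInf_le h

lemma le_maxsupp {f : ℕ →₀ ℝ} {n : ℕ} (h : f n ≠ 0) : n ≤ maxsupp f := by
  have hbdd : BddAbove {k | f k ≠ 0} := by
    have : {k | f k ≠ 0} = ↑f.support := by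
      ext k; simp [Finsupp.mem_support_iff]
    rw [this]
    exact f.support.finite_toSet.bddAbove
  exact le_csSup hbdd h

lemma minsupp_mono {f g : ℕ →₀ ℝ} (hg : g ≠ 0) (hs : g.support ⊆ f.support) :
    minsupp f ≤ minsupp g := by
  have h1 : minsupp g ∈ g.support := minsupp_mem hg
  exact minsupp_le (Finsupp.mem_support_iff.mp (hs h1))

lemma minsupp_ne {f g : ℕ →₀ ℝ} (hf : f ≠ 0) (hg : g ≠ 0)
    (hd : Disjoint f.support g.support) : minsupp f ≠ minsupp g := by
  intro h
  exact (Finset.disjoint_left.mp hd) (minsupp_mem hf) (h ▸ minsupp_mem hg)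

lemma dotp_eq_sum {f x : ℕ →₀ ℝ} {s : Finset ℕ} (hs : f.support ⊆ s) :
    dotp f x = ∑ n ∈ s, f n * x n :=
  Finsupp.sum_of_support_subset f hs _ (fun i _ => zero_mul _)

lemma dotp_smul_left (c : ℝ) (f x : ℕ →₀ ℝ) : dotp (c • f) x = c * dotp f x := by
  rw [dotp_eq_sum (s := f.support) Finsupp.support_smul,
    dotp_eq_sum (s := f.support) subset_rfl, Finset.mul_sum]
  apply Finset.sum_congr rfl
  intro n _
  simp [Finsupp.smul_apply, mul_assoc]

lemma dotp_add_left (f g x : ℕ →₀ ℝ) : dotp (f + g) x = dotp f x + dotp g x :=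
  Finsupp.sum_add_index' (fun _ => zero_mul _) (fun _ b c => add_mul b c _)

lemma dotp_sum_left {ι : Type*} (s : Finset ι) (g : ι → (ℕ →₀ ℝ)) (x : ℕ →₀ ℝ) :
    dotp (∑ i ∈ s, g i) x = ∑ i ∈ s, dotp (g i) x := by
  classical
  induction s using Finset.induction_on with
  | empty => simp [dotp]
  | insert _ _ hni ih =>
    rw [Finset.sum_insert hni, Finset.sum_insert hni, dotp_add_left, ih]

lemma dotp_sum_right {d : ℕ} (f : ℕ →₀ ℝ) (b : Fin d → ℝ) (x : Fin d → (ℕ →₀ ℝ)) :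
    dotp f (∑ k, b k • x k) = ∑ k, b k * dotp f (x k) := by
  rw [dotp_eq_sum (s := f.support) subset_rfl]
  have : ∀ n, (∑ k, b k • x k) n = ∑ k, b k * (x k) n := by
    intro n
    rw [Finsupp.finset_sum_apply]
    apply Finset.sum_congr rfl
    intro k _
    simp
  calc ∑ n ∈ f.support, f n * (∑ k, b k • x k) n
      = ∑ n ∈ f.support, ∑ k, b k * (f n * (x k) n) := by
        apply Finset.sum_congr rfl
        intro n _
        rw [this n, Finset.mul_sum]
        apply Finset.sum_congr rfl
        intro k _; ring
    _ = ∑ k, b k * ∑ n ∈ f.support, f n * (x k) n := by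
        rw [Finset.sum_comm]
        apply Finset.sum_congr rfl
        intro k _
        rw [Finset.mul_sum]
    _ = ∑ k, b k * dotp f (x k) := by
        apply Finset.sum_congr rfl
        intro k _
        rw [dotp_eq_sum (s := f.support) subset_rfl]

lemma dotp_filter (f x : ℕ →₀ ℝ) :
    dotp (Finsupp.filter (· ∈ x.support) f) x = dotp f x := by
  have hsub : (Finsupp.filter (· ∈ x.support) f).support ⊆ f.support := by
    rw [Finsupp.support_filter]; exact Finset.filter_subset _ _
  rw [dotp_eq_sum (s := f.support) hsub, dotp_eq_sum (s := f.support) subset_rfl]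
  apply Finset.sum_congr rfl
  intro n _
  rw [Finsupp.filter_apply]
  by_cases hn : n ∈ x.support
  · rw [if_pos hn]
  · rw [if_neg hn]
    have : x n = 0 := Finsupp.notMem_support_iff.mp hn
    rw [this, mul_zero, mul_zero]

lemma comp_coord {p : ℕ} (f : Fin p → (ℕ →₀ ℝ)) (lam : Fin p → ℝ) (m : ℝ) (hm : 1 ≤ m)
    (hdisj : ∀ i i', i ≠ i' → Disjoint (f i).support (f i').support)
    (hlam : (∑ i, (lam i) ^ 2) ≤ 1) (hcoord : ∀ i n, |f i n| ≤ 1) (n : ℕ) :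
    |(m⁻¹ • ∑ i, lam i • f i) n| ≤ 1 := by
  have hval : (m⁻¹ • ∑ i, lam i • f i) n = m⁻¹ * ∑ i, lam i * (f i) n := by
    rw [Finsupp.smul_apply, Finsupp.finset_sum_apply]
    simp
  rw [hval]
  have hS : |∑ i, lam i * (f i) n| ≤ 1 := by
    by_cases hex : ∃ i, (f i) n ≠ 0
    · obtain ⟨i₀, hi₀⟩ := hex
      have hsum : ∑ i, lam i * (f i) n = lam i₀ * (f i₀) n := by
        apply Finset.sum_eq_single i₀
        · intro b _ hb
          have : (f b) n = 0 := by
            by_contra hc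
            exact (Finset.disjoint_left.mp (hdisj b i₀ hb))
              (Finsupp.mem_support_iff.mpr hc) (Finsupp.mem_support_iff.mpr hi₀)
          rw [this, mul_zero]
        · intro h; exact absurd (Finset.mem_univ i₀) h
      rw [hsum]
      have h1 : lam i₀ ^ 2 ≤ 1 := by
        refine le_trans ?_ hlam
        exact Finset.single_le_sum (fun i _ => sq_nonneg (lam i)) (Finset.mem_univ i₀)
      have h2 : |lam i₀| ≤ 1 := by nlinarith [abs_nonneg (lam i₀), sq_abs (lam i₀)]
      calc |lam i₀ * (f i₀) n| = |lam i₀| * |(f i₀) n| := abs_mul _ _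
        _ ≤ 1 * 1 := mul_le_mul h2 (hcoord i₀ n) (abs_nonneg _) zero_le_one
        _ = 1 := mul_one 1
    · push_neg at hex
      have : ∑ i, lam i * (f i) n = 0 := by
        apply Finset.sum_eq_zero; intro i _; rw [hex i, mul_zero]
      rw [this]; norm_num
  have hm0 : (0:ℝ) ≤ m⁻¹ := inv_nonneg.mpr (le_trans zero_le_one hm)
  calc |m⁻¹ * ∑ i, lam i * (f i) n| = m⁻¹ * |∑ i, lam i * (f i) n| := by
        rw [abs_mul, abs_of_nonneg hm0]
    _ ≤ 1 * 1 := mul_le_mul (inv_le_one_of_one_le₀ hm) hS (abs_nonneg _) zero_le_one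
    _ = 1 := mul_one 1

lemma E_disjoint {N1 N2 : Set ℕ} {σc : List (Finset ℕ × ℕ) → ℕ} {p : ℕ}
    {E : Fin p → Finset ℕ} {js : Fin p → ℕ}
    (hspec : IsSpecial N1 N2 σc (List.ofFn fun i => (E i, js i))) :
    ∀ i i' : Fin p, i ≠ i' → Disjoint (E i) (E i') := by
  have hp := hspec.1.2.1
  rw [List.pairwise_ofFn] at hp
  intro i i' hne
  rcases lt_or_gt_of_ne hne with h | h
  · exact hp h
  · exact (hp h).symm

lemma DW_coord {N1 N2 : Set ℕ} {σc : List (Finset ℕ × ℕ) → ℕ} {f : ℕ →₀ ℝ} {w : ℕ}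
    (hf : DW N1 N2 σc f w) : ∀ n, |f n| ≤ 1 := by
  induction hf with
  | pos k =>
    intro n; rw [Finsupp.single_apply]; split <;> simp
  | neg k =>
    intro n; rw [Finsupp.single_apply]; split <;> simp
  | even j p f w lam hmem hdisj hallow hlam ih =>
    intro n
    apply comp_coord f lam _ _ hdisj hlam ih n
    have h2 : (2:ℝ) ≤ ((mseq (2 * j) : ℕ) : ℝ) := by exact_mod_cast two_le_mseq (2 * j)
    linarith
  | odd j p f E js lam hmem hsupp hspec hallow hbig hlam ih =>
    intro n
    apply comp_coord f lam _ _ ?_ hlam ih n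
    · have h2 : (2:ℝ) ≤ ((mseq (2 * j + 1) : ℕ) : ℝ) := by
        exact_mod_cast two_le_mseq (2 * j + 1)
      linarith
    · intro i i' hne
      exact Finset.disjoint_of_subset_left (hsupp i)
        (Finset.disjoint_of_subset_right (hsupp i') (E_disjoint hspec i i' hne))

lemma dotp_le_abs_sum {f x : ℕ →₀ ℝ} (hb : ∀ n, |f n| ≤ 1) :
    dotp f x ≤ ∑ n ∈ x.support, |x n| := by
  have h1 : dotp f x = ∑ n ∈ f.support ∩ x.support, f n * x n := by
    rw [dotp_eq_sum (s := f.support) subset_rfl]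
    apply (Finset.sum_subset Finset.inter_subset_left ?_).symm
    intro n hn hn'
    have : n ∉ x.support := fun hx => hn' (Finset.mem_inter.mpr ⟨hn, hx⟩)
    rw [Finsupp.notMem_support_iff.mp this, mul_zero]
  rw [h1]
  calc ∑ n ∈ f.support ∩ x.support, f n * x n
      ≤ ∑ n ∈ f.support ∩ x.support, |x n| := by
        apply Finset.sum_le_sum
        intro n _
        calc f n * x n ≤ |f n * x n| := le_abs_self _
          _ = |f n| * |x n| := abs_mul _ _
          _ ≤ 1 * |x n| := mul_le_mul_of_nonneg_right (hb n) (abs_nonneg _)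
          _ = |x n| := one_mul _
    _ ≤ ∑ n ∈ x.support, |x n| :=
        Finset.sum_le_sum_of_subset_of_nonneg Finset.inter_subset_right
          (fun n _ _ => abs_nonneg _)

lemma dotp_le_wnorm {N1 N2 : Set ℕ} {σc : List (Finset ℕ × ℕ) → ℕ} {f : ℕ →₀ ℝ} {w : ℕ}
    (hf : DW N1 N2 σc f w) (x : ℕ →₀ ℝ) : dotp f x ≤ wnorm N1 N2 σc x := by
  apply le_csSup
  · exact ⟨∑ n ∈ x.support, |x n|, by
      rintro r ⟨g, ⟨w', hg⟩, rfl⟩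
      exact dotp_le_abs_sum (DW_coord hg)⟩
  · exact ⟨f, ⟨w, hf⟩, rfl⟩

lemma sum_orderIso {ι M : Type*} [LinearOrder ι] [AddCommMonoid M] (I : Finset ι) (h : ι → M) :
    ∑ t : Fin I.card, h ((I.orderIsoOfFin rfl) t : ι) = ∑ i ∈ I, h i := by
  rw [← Finset.sum_coe_sort I h]
  exact Fintype.sum_equiv (I.orderIsoOfFin rfl).toEquiv _ _ (fun t => rfl)

lemma filter_finset_sum {ι : Type*} (P : ℕ → Prop) [DecidablePred P] (s : Finset ι)
    (g : ι → (ℕ →₀ ℝ)) :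
    Finsupp.filter P (∑ i ∈ s, g i) = ∑ i ∈ s, Finsupp.filter P (g i) := by
  classical
  induction s using Finset.induction_on with
  | empty => simp [Finsupp.filter_zero]
  | insert _ _ hni ih =>
    rw [Finset.sum_insert hni, Finset.sum_insert hni, Finsupp.filter_add, ih]

lemma filter_comb (P : ℕ → Prop) [DecidablePred P] (m : ℝ) {p : ℕ} (lams : Fin p → ℝ)
    (fs : Fin p → (ℕ →₀ ℝ)) :
    Finsupp.filter P (m⁻¹ • ∑ i, lams i • fs i)
      = m⁻¹ • ∑ i, lams i • Finsupp.filter P (fs i) := by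
  rw [Finsupp.filter_smul, filter_finset_sum]
  congr 1
  apply Finset.sum_congr rfl
  intro i _
  rw [Finsupp.filter_smul]

lemma smul_comb {ι : Type*} (τ m : ℝ) (hτ : τ ≠ 0) (s : Finset ι) (c : ι → ℝ)
    (g : ι → (ℕ →₀ ℝ)) :
    τ • (m⁻¹ • ∑ i ∈ s, (c i / τ) • g i) = m⁻¹ • ∑ i ∈ s, c i • g i := by
  rw [smul_comm]
  congr 1
  rw [Finset.smul_sum]
  apply Finset.sum_congr rfl
  intro i _
  rw [smul_smul, mul_div_cancel₀ _ hτ]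

lemma profile_sum_bound {p d : ℕ} (lams : Fin p → ℝ) (ρs : Fin p → Fin d → ℝ)
    (hρsum : ∀ i, (∑ k, ρs i k ^ 2) ≤ 1) (hlam : (∑ i, lams i ^ 2) ≤ 1) :
    (∑ k, Real.sqrt (∑ i, (lams i * ρs i k) ^ 2) ^ 2) ≤ 1 := by
  have h1 : ∀ k : Fin d, Real.sqrt (∑ i, (lams i * ρs i k) ^ 2) ^ 2
      = ∑ i, (lams i * ρs i k) ^ 2 := fun k =>
    Real.sq_sqrt (Finset.sum_nonneg fun i _ => sq_nonneg _)
  calc (∑ k, Real.sqrt (∑ i, (lams i * ρs i k) ^ 2) ^ 2)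
      = ∑ k, ∑ i, (lams i * ρs i k) ^ 2 := Finset.sum_congr rfl (fun k _ => h1 k)
    _ = ∑ i, ∑ k, (lams i * ρs i k) ^ 2 := Finset.sum_comm
    _ ≤ ∑ i, lams i ^ 2 := by
        apply Finset.sum_le_sum
        intro i _
        calc ∑ k, (lams i * ρs i k) ^ 2 = lams i ^ 2 * ∑ k, ρs i k ^ 2 := by
              rw [Finset.mul_sum]
              apply Finset.sum_congr rfl
              intro k _; ring
          _ ≤ lams i ^ 2 * 1 := mul_le_mul_of_nonneg_left (hρsum i) (sq_nonneg _)
          _ = lams i ^ 2 := mul_one _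
    _ ≤ 1 := hlam

lemma profile_of_single {N1 N2 : Set ℕ} {σc : List (Finset ℕ × ℕ) → ℕ} {f : ℕ →₀ ℝ} {w : ℕ}
    (hf : DW N1 N2 σc f w) (m : ℕ) (hm : ∀ n, n ≠ m → f n = 0)
    (d : ℕ) (S : Fin d → Finset ℕ) (hS : ∀ k k' : Fin d, k ≠ k' → Disjoint (S k) (S k')) :
    ∃ ρ : Fin d → ℝ, (∀ k, 0 ≤ ρ k) ∧ ((∑ k, ρ k ^ 2) ≤ 1) ∧
      (∀ k, ∃ g : ℕ →₀ ℝ, DW N1 N2 σc g w ∧ g.support ⊆ f.support ∧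
        Finsupp.filter (· ∈ S k) f = ρ k • g) := by
  classical
  refine ⟨fun k => if m ∈ S k then 1 else 0, fun k => by dsimp only; split <;> norm_num, ?_, ?_⟩
  · dsimp only
    by_cases hex : ∃ k, m ∈ S k
    · obtain ⟨k₀, hk₀⟩ := hex
      have hstep : ∀ k : Fin d, (if m ∈ S k then (1:ℝ) else 0) ^ 2
          = if k = k₀ then 1 else 0 := by
        intro k
        by_cases hk : m ∈ S k
        · have hkk : k = k₀ := by
            by_contra hne
            exact (Finset.disjoint_left.mp (hS k k₀ hne)) hk hk₀
          subst hkk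
          simp [hk]
        · have hkk : k ≠ k₀ := fun h => hk (h ▸ hk₀)
          simp [hk, hkk]
      rw [Finset.sum_congr rfl (fun k _ => hstep k)]
      rw [Finset.sum_ite_eq' Finset.univ k₀ (fun _ => (1:ℝ))]
      simp
    · push_neg at hex
      have : ∀ k ∈ Finset.univ, (if m ∈ S k then (1:ℝ) else 0) ^ 2 = 0 := by
        intro k _; simp [hex k]
      rw [Finset.sum_congr rfl this]
      simp
  · intro k
    dsimp only
    by_cases hk : m ∈ S k
    · refine ⟨f, hf, subset_rfl, ?_⟩
      rw [if_pos hk, one_smul]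
      ext n
      rw [Finsupp.filter_apply]
      by_cases hn : n ∈ S k
      · rw [if_pos hn]
      · rw [if_neg hn]
        have hnm : n ≠ m := fun h => hn (h ▸ hk)
        exact (hm n hnm).symm
    · refine ⟨f, hf, subset_rfl, ?_⟩
      rw [if_neg hk, zero_smul]
      ext n
      rw [Finsupp.filter_apply, Finsupp.coe_zero, Pi.zero_apply]
      by_cases hn : n ∈ S k
      · rw [if_pos hn]
        apply hm
        intro h
        exact hk (h ▸ hn)
      · rw [if_neg hn]

theorem DW_profile {N1 N2 : Set ℕ} {σc : List (Finset ℕ × ℕ) → ℕ} {f : ℕ →₀ ℝ} {w : ℕ}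
    (hf : DW N1 N2 σc f w) :
    ∀ (d : ℕ) (S : Fin d → Finset ℕ), (∀ k k' : Fin d, k ≠ k' → Disjoint (S k) (S k')) →
    ∃ ρ : Fin d → ℝ, (∀ k, 0 ≤ ρ k) ∧ ((∑ k, ρ k ^ 2) ≤ 1) ∧
      (∀ k, ∃ g : ℕ →₀ ℝ, DW N1 N2 σc g w ∧ g.support ⊆ f.support ∧
        Finsupp.filter (· ∈ S k) f = ρ k • g) := by
  induction hf with
  | pos a =>
    intro d S hS
    apply profile_of_single (DW.pos a) a ?_ d S hS
    intro n hn
    exact Finsupp.single_eq_of_ne' (fun h => hn h.symm)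
  | neg a =>
    intro d S hS
    apply profile_of_single (DW.neg a) a ?_ d S hS
    intro n hn
    exact Finsupp.single_eq_of_ne' (fun h => hn h.symm)
  | even j p fs ws lams hmem hdisj hallow hlam ih =>
    intro d S hS
    classical
    choose ρs hρ0 hρsum hg using fun i => ih i d S hS
    choose gs hgDW hgsupp hgeq using hg
    refine ⟨fun k => Real.sqrt (∑ i, (lams i * ρs i k) ^ 2), fun k => Real.sqrt_nonneg _,
      profile_sum_bound lams ρs hρsum hlam, ?_⟩
    intro k
    dsimp only
    set m : ℝ := ((mseq (2 * j) : ℕ) : ℝ) with hmdef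
    have hm2 : (2:ℝ) ≤ m := by
      rw [hmdef]; exact_mod_cast two_le_mseq (2 * j)
    have hmne : m ≠ 0 := by linarith
    have hfil : Finsupp.filter (· ∈ S k) (m⁻¹ • ∑ i, lams i • fs i)
        = m⁻¹ • ∑ i, lams i • Finsupp.filter (· ∈ S k) (fs i) :=
      filter_comb _ m lams fs
    by_cases hρk : Real.sqrt (∑ i, (lams i * ρs i k) ^ 2) = 0
    · -- degenerate: the filtered part is zero
      have h0 : (∑ i, (lams i * ρs i k) ^ 2) = 0 := by
        have hle := Real.sqrt_eq_zero'.mp hρk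
        have hge : (0:ℝ) ≤ ∑ i, (lams i * ρs i k) ^ 2 :=
          Finset.sum_nonneg fun i _ => sq_nonneg _
        linarith
      have hall : ∀ i, lams i * ρs i k = 0 := by
        intro i
        have := (Finset.sum_eq_zero_iff_of_nonneg (fun i _ => sq_nonneg _)).mp h0 i
          (Finset.mem_univ i)
        exact pow_eq_zero_iff (by norm_num) |>.mp this
      refine ⟨_, DW.even j p fs ws lams hmem hdisj hallow hlam, subset_rfl, ?_⟩
      rw [hρk, zero_smul, hfil]
      have hz : ∀ i ∈ Finset.univ, lams i • Finsupp.filter (· ∈ S k) (fs i) = (0 : ℕ →₀ ℝ) := by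
        intro i _
        rw [hgeq i k, smul_smul, hall i, zero_smul]
      rw [Finset.sum_congr rfl hz, Finset.sum_const_zero, smul_zero]
    · -- nondegenerate: build an even operation on the nonzero filtered parts
      set τ := Real.sqrt (∑ i, (lams i * ρs i k) ^ 2) with hτdef
      have hτpos : 0 < τ := lt_of_le_of_ne (Real.sqrt_nonneg _) (Ne.symm hρk)
      have hτsq : τ ^ 2 = ∑ i, (lams i * ρs i k) ^ 2 :=
        Real.sq_sqrt (Finset.sum_nonneg fun i _ => sq_nonneg _)
      set I : Finset (Fin p) :=
        Finset.univ.filter (fun i => lams i ≠ 0 ∧ Finsupp.filter (· ∈ S k) (fs i) ≠ 0) with hIdef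
      set e := I.orderIsoOfFin rfl with hedef
      have hIρ : ∀ i ∈ I, ρs i k ≠ 0 := by
        intro i hi h0
        have h2 := (Finset.mem_filter.mp hi).2.2
        apply h2
        rw [hgeq i k, h0, zero_smul]
      have hIg : ∀ i ∈ I, gs i k ≠ 0 := by
        intro i hi h0
        have h2 := (Finset.mem_filter.mp hi).2.2
        apply h2
        rw [hgeq i k, h0, smul_zero]
      have hIfs : ∀ i ∈ I, fs i ≠ 0 := by
        intro i hi h0
        have h2 := (Finset.mem_filter.mp hi).2.2
        apply h2
        rw [h0]
        ext n
        rw [Finsupp.filter_apply]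
        simp
      have hene : ∀ t t' : Fin I.card, t ≠ t' → ((e t : Fin p) ≠ (e t' : Fin p)) := by
        intro t t' htt' hc
        exact htt' (e.injective (Subtype.coe_injective hc))
      have hDWop : DW N1 N2 σc
          (m⁻¹ • ∑ t, (lams (e t) * ρs (e t) k / τ) • gs (e t) k) (mseq (2 * j)) := by
        apply DW.even j I.card (fun t => gs (e t) k) (fun t => ws (e t))
          (fun t => lams (e t) * ρs (e t) k / τ)
        · intro t; exact hgDW (e t) k
        · intro t t' htt'
          exact Finset.disjoint_of_subset_left (hgsupp (e t) k)
            (Finset.disjoint_of_subset_right (hgsupp (e t') k)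
              (hdisj _ _ (hene t t' htt')))
        · -- allowability via domination
          set φ : ℕ → ℕ := fun v =>
            if h : ∃ i, i ∈ I ∧ minsupp (gs i k) = v then minsupp (fs h.choose) else 0
            with hφdef
          have key : ∀ v, (h : ∃ i, i ∈ I ∧ minsupp (gs i k) = v) →
              (h.choose ∈ I ∧ minsupp (gs h.choose k) = v) := fun v h => h.choose_spec
          apply schreierM_dominate (nseq (2 * j))
            (Finset.univ.image fun i => minsupp (fs i)) _ φ hallow
          · intro v hv v' hv' hφeq
            simp only [Finset.coe_image, Set.mem_image] at hv hv'
            obtain ⟨t, _, rfl⟩ := hv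
            obtain ⟨t', _, rfl⟩ := hv'
            have h : ∃ i, i ∈ I ∧ minsupp (gs i k) = minsupp (gs (e t) k) :=
              ⟨e t, (e t).2, rfl⟩
            have h' : ∃ i, i ∈ I ∧ minsupp (gs i k) = minsupp (gs (e t') k) :=
              ⟨e t', (e t').2, rfl⟩
            have hc := key _ h
            have hc' := key _ h'
            rw [hφdef] at hφeq
            simp only [dif_pos h, dif_pos h'] at hφeq
            have : h.choose = h'.choose := by
              by_contra hne
              exact minsupp_ne (hIfs _ hc.1) (hIfs _ hc'.1) (hdisj _ _ hne) hφeq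
            rw [← hc.2, ← hc'.2, this]
          · intro v hv
            simp only [Finset.mem_image] at hv ⊢
            obtain ⟨t, _, rfl⟩ := hv
            have h : ∃ i, i ∈ I ∧ minsupp (gs i k) = minsupp (gs (e t) k) :=
              ⟨e t, (e t).2, rfl⟩
            rw [hφdef]
            simp only [dif_pos h]
            exact ⟨h.choose, Finset.mem_univ _, rfl⟩
          · intro v hv
            simp only [Finset.mem_image] at hv
            obtain ⟨t, _, rfl⟩ := hv
            have h : ∃ i, i ∈ I ∧ minsupp (gs i k) = minsupp (gs (e t) k) :=
              ⟨e t, (e t).2, rfl⟩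
            rw [hφdef]
            simp only [dif_pos h]
            have hc := key _ h
            calc minsupp (fs h.choose) ≤ minsupp (gs h.choose k) :=
                minsupp_mono (hIg _ hc.1) (hgsupp _ k)
              _ = minsupp (gs (e t) k) := hc.2
        · -- ℓ² bound on coefficients
          have hcalc : (∑ t, (lams (e t) * ρs (e t) k / τ) ^ 2)
              = (∑ i ∈ I, (lams i * ρs i k) ^ 2) / τ ^ 2 := by
            rw [Finset.sum_div,
              ← sum_orderIso I (fun i => (lams i * ρs i k) ^ 2 / τ ^ 2)]
            apply Finset.sum_congr rfl
            intro t _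
            rw [div_pow]
          rw [hcalc, hτsq]
          apply div_le_one_of_le₀
          · apply Finset.sum_le_sum_of_subset_of_nonneg (Finset.subset_univ I)
            intro i _ _; exact sq_nonneg _
          · exact Finset.sum_nonneg fun i _ => sq_nonneg _
      -- the equation
      have hzero : ∀ i ∈ Finset.univ, i ∉ I →
          lams i • Finsupp.filter (· ∈ S k) (fs i) = (0 : ℕ →₀ ℝ) := by
        intro i _ hiI
        by_cases hl : lams i = 0
        · rw [hl, zero_smul]
        · have hfil0 : Finsupp.filter (· ∈ S k) (fs i) = 0 := by
            by_contra hc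
            exact hiI (Finset.mem_filter.mpr ⟨Finset.mem_univ i, hl, hc⟩)
          rw [hfil0, smul_zero]
      have hstep1 : (∑ i, lams i • Finsupp.filter (· ∈ S k) (fs i))
          = ∑ i ∈ I, lams i • Finsupp.filter (· ∈ S k) (fs i) :=
        (Finset.sum_subset (Finset.subset_univ I) hzero).symm
      have hstep2 : (∑ i ∈ I, lams i • Finsupp.filter (· ∈ S k) (fs i))
          = ∑ i ∈ I, (lams i * ρs i k) • gs i k := by
        apply Finset.sum_congr rfl
        intro i _
        rw [hgeq i k, smul_smul]
      have hstep3 : (∑ i ∈ I, (lams i * ρs i k) • gs i k)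
          = ∑ t, (lams (e t) * ρs (e t) k) • gs (e t) k :=
        (sum_orderIso I (fun i => (lams i * ρs i k) • gs i k)).symm
      have heq : Finsupp.filter (· ∈ S k) (m⁻¹ • ∑ i, lams i • fs i)
          = τ • (m⁻¹ • ∑ t, (lams (e t) * ρs (e t) k / τ) • gs (e t) k) := by
        rw [hfil, hstep1, hstep2, hstep3]
        exact (smul_comb τ m (ne_of_gt hτpos) Finset.univ
          (fun t => lams (e t) * ρs (e t) k) (fun t => gs (e t) k)).symm
      refine ⟨_, hDWop, ?_, heq⟩
      have h1 : (τ • (m⁻¹ • ∑ t, (lams (e t) * ρs (e t) k / τ) • gs (e t) k)).support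
          = (m⁻¹ • ∑ t, (lams (e t) * ρs (e t) k / τ) • gs (e t) k).support :=
        Finsupp.support_smul_eq (ne_of_gt hτpos)
      rw [← h1, ← heq, Finsupp.support_filter]
      exact Finset.filter_subset _ _
  | odd j p fs Es jss lams hmem hsupp hspec hallow hbig hlam ih =>
    intro d S hS
    classical
    choose ρs hρ0 hρsum hg using fun i => ih i d S hS
    choose gs hgDW hgsupp hgeq using hg
    refine ⟨fun k => Real.sqrt (∑ i, (lams i * ρs i k) ^ 2), fun k => Real.sqrt_nonneg _,
      profile_sum_bound lams ρs hρsum hlam, ?_⟩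
    intro k
    dsimp only
    set m : ℝ := ((mseq (2 * j + 1) : ℕ) : ℝ) with hmdef
    have hm2 : (2:ℝ) ≤ m := by
      rw [hmdef]; exact_mod_cast two_le_mseq (2 * j + 1)
    have hmne : m ≠ 0 := by linarith
    have hfil : Finsupp.filter (· ∈ S k) (m⁻¹ • ∑ i, lams i • fs i)
        = m⁻¹ • ∑ i, lams i • Finsupp.filter (· ∈ S k) (fs i) :=
      filter_comb _ m lams fs
    by_cases hρk : Real.sqrt (∑ i, (lams i * ρs i k) ^ 2) = 0
    · have h0 : (∑ i, (lams i * ρs i k) ^ 2) = 0 := by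
        have hle := Real.sqrt_eq_zero'.mp hρk
        have hge : (0:ℝ) ≤ ∑ i, (lams i * ρs i k) ^ 2 :=
          Finset.sum_nonneg fun i _ => sq_nonneg _
        linarith
      have hall : ∀ i, lams i * ρs i k = 0 := by
        intro i
        have := (Finset.sum_eq_zero_iff_of_nonneg (fun i _ => sq_nonneg _)).mp h0 i
          (Finset.mem_univ i)
        exact pow_eq_zero_iff (by norm_num) |>.mp this
      refine ⟨_, DW.odd j p fs Es jss lams hmem hsupp hspec hallow hbig hlam, subset_rfl, ?_⟩
      rw [hρk, zero_smul, hfil]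
      have hz : ∀ i ∈ Finset.univ, lams i • Finsupp.filter (· ∈ S k) (fs i) = (0 : ℕ →₀ ℝ) := by
        intro i _
        rw [hgeq i k, smul_smul, hall i, zero_smul]
      rw [Finset.sum_congr rfl hz, Finset.sum_const_zero, smul_zero]
    · set τ := Real.sqrt (∑ i, (lams i * ρs i k) ^ 2) with hτdef
      have hτpos : 0 < τ := lt_of_le_of_ne (Real.sqrt_nonneg _) (Ne.symm hρk)
      have hτsq : τ ^ 2 = ∑ i, (lams i * ρs i k) ^ 2 :=
        Real.sq_sqrt (Finset.sum_nonneg fun i _ => sq_nonneg _)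
      have hDWop : DW N1 N2 σc
          (m⁻¹ • ∑ i, (lams i * ρs i k / τ) • gs i k) (mseq (2 * j + 1)) := by
        apply DW.odd j p (fun i => gs i k) Es jss (fun i => lams i * ρs i k / τ)
          (fun i => hgDW i k) (fun i => subset_trans (hgsupp i k) (hsupp i))
          hspec hallow hbig
        have hcalc : (∑ i, (lams i * ρs i k / τ) ^ 2)
            = (∑ i, (lams i * ρs i k) ^ 2) / τ ^ 2 := by
          rw [Finset.sum_div]
          apply Finset.sum_congr rfl
          intro i _
          rw [div_pow]
        rw [hcalc, hτsq, div_self (by nlinarith [hτpos, hτsq] : (∑ i, (lams i * ρs i k) ^ 2) ≠ 0)]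
      have hstep2 : (∑ i, lams i • Finsupp.filter (· ∈ S k) (fs i))
          = ∑ i, (lams i * ρs i k) • gs i k := by
        apply Finset.sum_congr rfl
        intro i _
        rw [hgeq i k, smul_smul]
      have heq : Finsupp.filter (· ∈ S k) (m⁻¹ • ∑ i, lams i • fs i)
          = τ • (m⁻¹ • ∑ i, (lams i * ρs i k / τ) • gs i k) := by
        rw [hfil, hstep2]
        exact (smul_comb τ m (ne_of_gt hτpos) Finset.univ
          (fun i => lams i * ρs i k) (fun i => gs i k)).symm
      refine ⟨_, hDWop, ?_, heq⟩
      have h1 : (τ • (m⁻¹ • ∑ i, (lams i * ρs i k / τ) • gs i k)).support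
          = (m⁻¹ • ∑ i, (lams i * ρs i k / τ) • gs i k).support :=
        Finsupp.support_smul_eq (ne_of_gt hτpos)
      rw [← h1, ← heq, Finsupp.support_filter]
      exact Finset.filter_subset _ _


-- CHUNK5

end AUX2

/-- **Minimum Free Estimate.** Let `(f_ℓ)_{ℓ=1}^p ⊆ D_wh` have pairwise
disjoint supports and `(x_k)_{k=1}^d` be a block sequence in `X_wh` with `‖x_k‖ ≤ C`,
such that `min supp f_ℓ ∉ ran x_k` for all `ℓ, k` (where `ran x` is the smallest interval
containing `supp x`).  Then for every `(λ_ℓ)` in the unit ball of `ℓ_2` and all scalars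
`(b_k)`: `∑_ℓ λ_ℓ f_ℓ(∑_k b_k x_k) ≤ 4C (∑_k b_k^2)^{1/2}`. -/
theorem minimum_free_estimate (N1 N2 : Set ℕ) (σ : List (Finset ℕ × ℕ) → ℕ)
    (hN : N1 ∪ N2 = Set.univ) (hN1 : N1.Infinite) (hN2 : N2.Infinite)
    (hσ : GoodCoding N1 N2 σ)
    (C : ℝ) (hC : 0 < C)
    (d : ℕ) (x : Fin d → ℕ →₀ ℝ)
    (hne : ∀ k, (x k).support.Nonempty)
    (hblock : ∀ k k' : Fin d, k < k' →
      ∀ a ∈ (x k).support, ∀ b ∈ (x k').support, a < b)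
    (hxnorm : ∀ k, wnorm N1 N2 σ (x k) ≤ C)
    (p : ℕ) (fl : Fin p → ℕ →₀ ℝ)
    (hD : ∀ l, DWh N1 N2 σ (fl l))
    (hdisj : ∀ l l', l ≠ l' → Disjoint (fl l).support (fl l').support)
    (hfree : ∀ (l : Fin p) (k : Fin d),
      minsupp (fl l) ∉ Finset.Icc (minsupp (x k)) (maxsupp (x k)))
    (lam : Fin p → ℝ) (hlam : (∑ l, (lam l) ^ 2) ≤ 1)
    (b : Fin d → ℝ) :
    (∑ l, lam l * dotp (fl l) (∑ k, b k • x k))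
      ≤ 4 * C * Real.sqrt (∑ k, (b k) ^ 2) := by
  classical
  have hSdisj : ∀ k k' : Fin d, k ≠ k' → Disjoint (x k).support (x k').support := by
    intro k k' hne'
    rcases lt_or_gt_of_ne hne' with h | h
    · rw [Finset.disjoint_left]
      intro a ha ha'
      exact lt_irrefl a (hblock k k' h a ha a ha')
    · rw [Finset.disjoint_left]
      intro a ha ha'
      exact lt_irrefl a (hblock k' k h a ha' a ha)
  choose w hw using hD
  have hprof := fun l => DW_profile (hw l) d (fun k => (x k).support) hSdisj
  choose ρ hρ0 hρsum hgex using hprof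
  choose g hgDW hgsupp hgeq0 using hgex
  have hgeq : ∀ (l : Fin p) (k : Fin d),
      Finsupp.filter (· ∈ (x k).support) (fl l) = ρ l k • g l k := hgeq0
  set τ : Fin d → ℝ := fun k => Real.sqrt (∑ l, (lam l * ρ l k) ^ 2) with hτdef
  have hτ0 : ∀ k, 0 ≤ τ k := fun k => by rw [hτdef]; exact Real.sqrt_nonneg _
  have hτsum : (∑ k, τ k ^ 2) ≤ 1 := by
    rw [hτdef]
    exact profile_sum_bound lam ρ hρsum hlam
  have hCpos : (0:ℝ) < C := hC
  -- the per-block estimate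
  have hblockbound : ∀ k : Fin d,
      b k * (∑ l, lam l * dotp (fl l) (x k)) ≤ |b k| * (2 * C * τ k) := by
    intro k
    set I : Finset (Fin p) := Finset.univ.filter
      (fun l => lam l ≠ 0 ∧ Finsupp.filter (· ∈ (x k).support) (fl l) ≠ 0) with hIdef
    have hred : (∑ l, lam l * dotp (fl l) (x k)) = ∑ l ∈ I, lam l * dotp (fl l) (x k) := by
      symm
      apply Finset.sum_subset (Finset.subset_univ I)
      intro l _ hlI
      by_cases hl : lam l = 0
      · rw [hl, zero_mul]
      · have hfil0 : Finsupp.filter (· ∈ (x k).support) (fl l) = 0 := by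
          by_contra hc
          exact hlI (Finset.mem_filter.mpr ⟨Finset.mem_univ l, hl, hc⟩)
        have hz : dotp (fl l) (x k) = 0 := by
          rw [← dotp_filter (fl l) (x k), hfil0]
          simp [dotp]
        rw [hz, mul_zero]
    rcases Finset.eq_empty_or_nonempty I with hIem | hInon
    · rw [hred, hIem, Finset.sum_empty, mul_zero]
      have h1 : (0:ℝ) ≤ 2 * C * τ k := by
        apply mul_nonneg (by linarith) (hτ0 k)
      exact mul_nonneg (abs_nonneg _) h1
    · -- facts about members of I
      have hIlam : ∀ l ∈ I, lam l ≠ 0 := fun l hl => ((Finset.mem_filter.mp hl).2).1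
      have hIfil : ∀ l ∈ I, Finsupp.filter (· ∈ (x k).support) (fl l) ≠ 0 :=
        fun l hl => ((Finset.mem_filter.mp hl).2).2
      have hIρ : ∀ l ∈ I, ρ l k ≠ 0 := by
        intro l hl h0
        apply hIfil l hl
        rw [hgeq l k, h0, zero_smul]
      have hIg : ∀ l ∈ I, g l k ≠ 0 := by
        intro l hl h0
        apply hIfil l hl
        rw [hgeq l k, h0, smul_zero]
      have hIfl : ∀ l ∈ I, fl l ≠ 0 := by
        intro l hl h0
        apply hIfil l hl
        rw [h0]
        ext n
        rw [Finsupp.filter_apply]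
        simp
      have hgsupp' : ∀ l ∈ I, (g l k).support
          = (Finsupp.filter (· ∈ (x k).support) (fl l)).support := by
        intro l hl
        rw [hgeq l k, Finsupp.support_smul_eq (hIρ l hl)]
      have hgsuppx : ∀ l ∈ I, (g l k).support ⊆ (x k).support := by
        intro l hl
        rw [hgsupp' l hl, Finsupp.support_filter]
        intro n hn
        exact (Finset.mem_filter.mp hn).2
      -- capture count: |I| ≤ minsupp (x k)
      have hcard : I.card ≤ minsupp (x k) := by
        have hmap : ∀ l ∈ I, minsupp (fl l) ∈ Finset.range (minsupp (x k)) := by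
          intro l hl
          rw [Finset.mem_range]
          have hfil_ne := hIfil l hl
          have h1 : minsupp (fl l) ≤ minsupp (Finsupp.filter (· ∈ (x k).support) (fl l)) := by
            apply minsupp_mono hfil_ne
            rw [Finsupp.support_filter]
            exact Finset.filter_subset _ _
          have h2 : minsupp (Finsupp.filter (· ∈ (x k).support) (fl l)) ∈ (x k).support := by
            have hmm := minsupp_mem hfil_ne
            rw [Finsupp.support_filter] at hmm
            exact (Finset.mem_filter.mp hmm).2
          have h3 : minsupp (fl l) ≤ maxsupp (x k) :=
            le_trans h1 (le_maxsupp (Finsupp.mem_support_iff.mp h2))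
          by_contra hge
          push_neg at hge
          exact hfree l k (Finset.mem_Icc.mpr ⟨hge, h3⟩)
        have hinj : Set.InjOn (fun l => minsupp (fl l)) ↑I := by
          intro l hl l' hl' heq'
          by_contra hne'
          exact minsupp_ne (hIfl l hl) (hIfl l' hl') (hdisj l l' hne') heq'
        calc I.card ≤ (Finset.range (minsupp (x k))).card :=
            Finset.card_le_card_of_injOn _ hmap hinj
          _ = minsupp (x k) := Finset.card_range _
      -- positive mass over I
      have hpos : 0 < ∑ l ∈ I, (lam l * ρ l k) ^ 2 := by
        apply Finset.sum_pos ?_ hInon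
        intro l hl
        have : lam l * ρ l k ≠ 0 := mul_ne_zero (hIlam l hl) (hIρ l hl)
        positivity
      set τ' := Real.sqrt (∑ l ∈ I, (lam l * ρ l k) ^ 2) with hτ'def
      have hτ'pos : 0 < τ' := by rw [hτ'def]; exact Real.sqrt_pos.mpr hpos
      have hτ'sq : τ' ^ 2 = ∑ l ∈ I, (lam l * ρ l k) ^ 2 := by
        rw [hτ'def]; exact Real.sq_sqrt (le_of_lt hpos)
      have hττ' : τ' ≤ τ k := by
        rw [hτ'def, hτdef]
        apply Real.sqrt_le_sqrt
        apply Finset.sum_le_sum_of_subset_of_nonneg (Finset.subset_univ I)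
        intro l _ _
        exact sq_nonneg _
      -- sign
      set s : ℝ := if 0 ≤ b k then 1 else -1 with hsdef
      have hbk : b k = |b k| * s := by
        rw [hsdef]
        split
        · rw [abs_of_nonneg (by assumption)]; ring
        · rw [abs_of_neg (lt_of_not_ge (by assumption))]; ring
      have hs2 : s ^ 2 = 1 := by rw [hsdef]; split <;> norm_num
      set e := I.orderIsoOfFin rfl with hedef
      have heneq : ∀ t t' : Fin I.card, t ≠ t' → ((e t : Fin p) ≠ (e t' : Fin p)) := by
        intro t t' htt' hc
        exact htt' (e.injective (Subtype.coe_injective hc))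
      -- the S₁ even operation at this block
      have hDWop : DW N1 N2 σ
          (((mseq (2 * 0) : ℕ) : ℝ)⁻¹ •
            ∑ t, (s * lam (e t) * ρ (e t) k / τ') • g (e t) k) (mseq (2 * 0)) := by
        apply DW.even 0 I.card (fun t => g (e t) k) (fun t => w (e t))
          (fun t => s * lam (e t) * ρ (e t) k / τ')
        · intro t; exact hgDW (e t) k
        · intro t t' htt'
          have hsub : ∀ u : Fin I.card, (g (e u) k).support ⊆ (fl (e u)).support :=
            fun u => hgsupp (e u) k
          exact Finset.disjoint_of_subset_left (hsub t)
            (Finset.disjoint_of_subset_right (hsub t') (hdisj _ _ (heneq t t' htt')))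
        · -- S₁-allowability
          have hSM : SchreierM (nseq (2 * 0)) = SchreierOne := by
            norm_num [nseq, SchreierM]
          rw [hSM]
          intro v hv
          simp only [Finset.mem_image] at hv
          obtain ⟨t, _, rfl⟩ := hv
          have hvx : minsupp (g (e t) k) ∈ (x k).support :=
            hgsuppx (e t) (e t).2 (minsupp_mem (hIg (e t) (e t).2))
          have hva : minsupp (x k) ≤ minsupp (g (e t) k) :=
            minsupp_le (Finsupp.mem_support_iff.mp hvx)
          calc (Finset.univ.image fun t => minsupp (g (e t) k)).card
              ≤ Finset.univ.card := Finset.card_image_le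
            _ = I.card := by rw [Finset.card_univ, Fintype.card_fin]
            _ ≤ minsupp (x k) := hcard
            _ ≤ minsupp (g (e t) k) := hva
        · -- coefficients
          have hcalc : (∑ t, (s * lam (e t) * ρ (e t) k / τ') ^ 2)
              = (∑ l ∈ I, (lam l * ρ l k) ^ 2) / τ' ^ 2 := by
            rw [Finset.sum_div,
              ← sum_orderIso I (fun l => (lam l * ρ l k) ^ 2 / τ' ^ 2)]
            apply Finset.sum_congr rfl
            intro t _
            rw [div_pow]
            congr 1
            calc (s * lam (e t) * ρ (e t) k) ^ 2
                = s ^ 2 * (lam (e t) * ρ (e t) k) ^ 2 := by ring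
              _ = (lam (e t) * ρ (e t) k) ^ 2 := by rw [hs2, one_mul]
          rw [hcalc, ← hτ'sq, div_self (by positivity)]
      -- evaluate the operation on x k
      have hm0 : ((mseq (2 * 0) : ℕ) : ℝ) = 2 := by norm_num [mseq]
      have hfldot : ∀ t : Fin I.card,
          dotp (fl (e t)) (x k) = ρ (e t) k * dotp (g (e t) k) (x k) := by
        intro t
        rw [← dotp_filter (fl (e t)) (x k), hgeq (e t) k, dotp_smul_left]
      have hdot : dotp (((mseq (2 * 0) : ℕ) : ℝ)⁻¹ •
          ∑ t, (s * lam (e t) * ρ (e t) k / τ') • g (e t) k) (x k)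
          = 2⁻¹ * (s / τ') * ∑ l ∈ I, lam l * dotp (fl l) (x k) := by
        rw [dotp_smul_left, dotp_sum_left, hm0]
        have hterm : ∀ t : Fin I.card,
            dotp ((s * lam (e t) * ρ (e t) k / τ') • g (e t) k) (x k)
              = (s / τ') * (lam (e t) * dotp (fl (e t)) (x k)) := by
          intro t
          rw [dotp_smul_left, hfldot t]
          ring
        rw [Finset.sum_congr rfl (fun t _ => hterm t), ← Finset.mul_sum,
          sum_orderIso I (fun l => lam l * dotp (fl l) (x k))]
        ring
      have hdle : dotp (((mseq (2 * 0) : ℕ) : ℝ)⁻¹ •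
          ∑ t, (s * lam (e t) * ρ (e t) k / τ') • g (e t) k) (x k) ≤ C :=
        le_trans (dotp_le_wnorm hDWop (x k)) (hxnorm k)
      have hsT : s * (∑ l ∈ I, lam l * dotp (fl l) (x k)) ≤ 2 * τ' * C := by
        have h1 : s * (∑ l ∈ I, lam l * dotp (fl l) (x k))
            = 2 * τ' * (2⁻¹ * (s / τ') * ∑ l ∈ I, lam l * dotp (fl l) (x k)) := by
          have hτ'ne : τ' ≠ 0 := ne_of_gt hτ'pos
          field_simp
        rw [h1, ← hdot]
        apply mul_le_mul_of_nonneg_left hdle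
        positivity
      rw [hred]
      have hbT : b k * (∑ l ∈ I, lam l * dotp (fl l) (x k))
          = |b k| * (s * (∑ l ∈ I, lam l * dotp (fl l) (x k))) := by
        rw [hsdef]
        split
        · rw [abs_of_nonneg (by assumption)]; ring
        · rw [abs_of_neg (lt_of_not_ge (by assumption))]; ring
      rw [hbT]
      calc |b k| * (s * ∑ l ∈ I, lam l * dotp (fl l) (x k))
          ≤ |b k| * (2 * τ' * C) := mul_le_mul_of_nonneg_left hsT (abs_nonneg _)
        _ ≤ |b k| * (2 * C * τ k) := by
            apply mul_le_mul_of_nonneg_left ?_ (abs_nonneg _)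
            nlinarith [hττ', hCpos, hτ'pos]
  -- assembling
  have hswap : (∑ l, lam l * dotp (fl l) (∑ k, b k • x k))
      = ∑ k, b k * ∑ l, lam l * dotp (fl l) (x k) := by
    calc (∑ l, lam l * dotp (fl l) (∑ k, b k • x k))
        = ∑ l, ∑ k, lam l * (b k * dotp (fl l) (x k)) := by
          apply Finset.sum_congr rfl
          intro l _
          rw [dotp_sum_right, Finset.mul_sum]
      _ = ∑ k, ∑ l, lam l * (b k * dotp (fl l) (x k)) := Finset.sum_comm
      _ = ∑ k, b k * ∑ l, lam l * dotp (fl l) (x k) := by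
          apply Finset.sum_congr rfl
          intro k _
          rw [Finset.mul_sum]
          apply Finset.sum_congr rfl
          intro l _
          ring
  have hCS : (∑ k, |b k| * τ k)
      ≤ Real.sqrt (∑ k, b k ^ 2) * Real.sqrt (∑ k, τ k ^ 2) := by
    have h := Finset.sum_mul_sq_le_sq_mul_sq Finset.univ (fun k => |b k|) τ
    have h2 : (∑ k, |b k| ^ 2) = ∑ k, b k ^ 2 := by
      apply Finset.sum_congr rfl
      intro k _
      exact sq_abs _
    have h3 : (0:ℝ) ≤ ∑ k, |b k| * τ k :=
      Finset.sum_nonneg fun k _ => mul_nonneg (abs_nonneg _) (hτ0 k)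
    have h4 := Real.sqrt_le_sqrt (h2 ▸ h)
    rw [Real.sqrt_sq h3] at h4
    rw [← Real.sqrt_mul (Finset.sum_nonneg fun k _ => sq_nonneg (b k))]
    exact h4
  have hsqτ : Real.sqrt (∑ k, τ k ^ 2) ≤ 1 := by
    rw [show (1:ℝ) = Real.sqrt 1 by simp]
    exact Real.sqrt_le_sqrt hτsum
  have hsqb : (0:ℝ) ≤ Real.sqrt (∑ k, b k ^ 2) := Real.sqrt_nonneg _
  calc (∑ l, lam l * dotp (fl l) (∑ k, b k • x k))
      = ∑ k, b k * ∑ l, lam l * dotp (fl l) (x k) := hswap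
    _ ≤ ∑ k, |b k| * (2 * C * τ k) := Finset.sum_le_sum fun k _ => hblockbound k
    _ = 2 * C * ∑ k, |b k| * τ k := by
        rw [Finset.mul_sum]
        apply Finset.sum_congr rfl
        intro k _
        ring
    _ ≤ 2 * C * (Real.sqrt (∑ k, b k ^ 2) * Real.sqrt (∑ k, τ k ^ 2)) := by
        apply mul_le_mul_of_nonneg_left hCS (by linarith)
    _ ≤ 2 * C * (Real.sqrt (∑ k, b k ^ 2) * 1) := by
        apply mul_le_mul_of_nonneg_left ?_ (by linarith)
        exact mul_le_mul_of_nonneg_left hsqτ hsqb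
    _ ≤ 4 * C * Real.sqrt (∑ k, (b k) ^ 2) := by nlinarith
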